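/- Let n ≥ 2 and let (X,d) be a metric space with |X| ≥ n. If T : X → X is a mapping contracting total pairwise distance on n points, then T is continuous. -/

import Mathlib

noncomputable def totalS {X : Type*} [MetricSpace X] {n : ℕ} (x : Fin n → X) : ℝ :=
  ∑ i : Fin n, ∑ j ∈ Finset.Ioi i, dist (x i) (x j)

lemma aux_infinite_punctured_ball {X : Type*} [MetricSpace X] {x₀ : X}
    (h : (nhdsWithin x₀ {x₀}ᶜ).NeBot) {r : ℝ} (hr : 0 < r) :
    (Metric.ball x₀ r \ {x₀}).Infinite := by
  have hne : ∀ ε : ℝ, 0 < ε → (Metric.ball x₀ ε ∩ {x₀}ᶜ).Nonempty := by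
    intro ε hε
    exact (Metric.nhdsWithin_basis_ball.neBot_iff.mp h) hε
  by_contra hfin
  rw [Set.not_infinite] at hfin
  have hfin' : (Metric.ball x₀ r ∩ {x₀}ᶜ).Finite := by
    rwa [← Set.diff_eq]
  have hnonempty : (Metric.ball x₀ r ∩ {x₀}ᶜ).Nonempty := hne r hr
  set t := hfin'.toFinset with ht
  have htne : t.Nonempty := by
    rwa [ht, Set.Finite.toFinset_nonempty]
  set d := t.inf' htne (fun z => dist z x₀) with hd
  have hdpos : 0 < d := by
    rw [hd, Finset.lt_inf'_iff]
    intro z hz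
    have hzmem : z ∈ Metric.ball x₀ r ∩ {x₀}ᶜ := by
      rwa [ht, Set.Finite.mem_toFinset] at hz
    exact dist_pos.mpr hzmem.2
  obtain ⟨z, hz⟩ := hne (min d r) (lt_min hdpos hr)
  have hz1 : z ∈ Metric.ball x₀ r ∩ {x₀}ᶜ :=
    ⟨Metric.ball_subset_ball (min_le_right d r) hz.1, hz.2⟩
  have hz2 : d ≤ dist z x₀ :=
    Finset.inf'_le _ (by rw [ht, Set.Finite.mem_toFinset]; exact hz1)
  have hz3 : dist z x₀ < min d r := hz.1
  have := lt_of_le_of_lt hz2 hz3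
  exact absurd (min_le_left d r) (not_le.mpr this)

theorem stmt_2 {X : Type*} [MetricSpace X] (n : ℕ) (hn : 2 ≤ n)
    (hcard : ∃ f : Fin n → X, Function.Injective f)
    (T : X → X)
    (hT : ∃ α : ℝ, 0 ≤ α ∧ α < 1 ∧
      ∀ x : Fin n → X, Function.Injective x → totalS (T ∘ x) ≤ α * totalS x) :
    Continuous T := by
  obtain ⟨m, rfl⟩ : ∃ m, n = m + 2 := ⟨n - 2, by omega⟩
  obtain ⟨α, hα0, hα1, hcontr⟩ := hT
  rw [Metric.continuous_iff]
  intro x₀ ε hε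
  by_cases hiso : (nhdsWithin x₀ {x₀}ᶜ).NeBot
  · -- accumulation point case
    set δ : ℝ := ε / (4 * ((m : ℝ) + 2) ^ 2) with hδdef
    have hm2 : (0 : ℝ) < (m : ℝ) + 2 := by positivity
    have hδ : 0 < δ := by positivity
    refine ⟨δ, hδ, fun y hy => ?_⟩
    by_cases hxy : y = x₀
    · simp [hxy, hε]
    -- choose m extra points in the ball, distinct from x₀ and y
    have h1 : (Metric.ball x₀ δ \ {x₀}).Infinite := aux_infinite_punctured_ball hiso hδ
    have hinf : ((Metric.ball x₀ δ \ {x₀}) \ {y}).Infinite :=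
      h1.diff (Set.finite_singleton y)
    haveI := hinf.to_subtype
    set s := (Metric.ball x₀ δ \ {x₀}) \ {y} with hs
    let e : ℕ ↪ s := Infinite.natEmbedding s
    set w : Fin m → X := fun i => ((e (i : ℕ) : s) : X) with hw
    have hwmem : ∀ i, w i ∈ s := fun i => (e (i : ℕ)).2
    have hwinj : Function.Injective w := by
      intro i j hij
      exact Fin.val_injective (e.injective (Subtype.ext hij))
    set x : Fin (m + 2) → X := Fin.cons x₀ (Fin.cons y w) with hx
    have hx0 : x 0 = x₀ := rfl
    have hx1 : x 1 = y := rfl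
    have hxinj : Function.Injective x := by
      rw [hx, Fin.cons_injective_iff]
      refine ⟨?_, ?_⟩
      · rintro ⟨i, hi⟩
        induction i using Fin.cases with
        | zero => exact hxy (by simpa using hi)
        | succ i => exact (hwmem i).1.2 (Set.mem_singleton_iff.mpr (by simpa using hi))
      · rw [Fin.cons_injective_iff]
        refine ⟨?_, hwinj⟩
        rintro ⟨i, hi⟩
        exact (hwmem i).2 (Set.mem_singleton_iff.mpr (by simpa using hi))
    -- every point of the tuple is within δ of x₀
    have hclose : ∀ i, dist (x i) x₀ ≤ δ := by
      intro i
      induction i using Fin.cases with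
      | zero => rw [hx0, dist_self]; exact hδ.le
      | succ i =>
        induction i using Fin.cases with
        | zero => rw [show x (Fin.succ 0) = y from rfl]; exact hy.le
        | succ i =>
          have h4 := (hwmem i).1.1
          rw [Metric.mem_ball] at h4
          simpa [hx] using h4.le
    -- bound totalS x
    have hS : totalS x ≤ ((m : ℝ) + 2) ^ 2 * (2 * δ) := by
      have hstep : totalS x ≤ ∑ _i : Fin (m + 2), ∑ _j ∈ Finset.Ioi _i, (2 * δ) := by
        refine Finset.sum_le_sum fun i _ => Finset.sum_le_sum fun j _ => ?_
        calc dist (x i) (x j) ≤ dist (x i) x₀ + dist x₀ (x j) := dist_triangle _ _ _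
          _ ≤ δ + δ := add_le_add (hclose i) (by rw [dist_comm]; exact hclose j)
          _ = 2 * δ := by ring
      refine hstep.trans ?_
      have : ∀ i : Fin (m + 2), ∑ _j ∈ Finset.Ioi i, (2 * δ) ≤ ((m : ℝ) + 2) * (2 * δ) := by
        intro i
        rw [Finset.sum_const, nsmul_eq_mul]
        have hcard : (Finset.Ioi i).card ≤ m + 2 := by
          exact (Finset.card_le_card (Finset.subset_univ _)).trans (by simp)
        have : ((Finset.Ioi i).card : ℝ) ≤ (m : ℝ) + 2 := by exact_mod_cast hcard
        nlinarith [hδ.le]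
      calc ∑ i : Fin (m + 2), ∑ _j ∈ Finset.Ioi i, (2 * δ)
          ≤ ∑ _i : Fin (m + 2), ((m : ℝ) + 2) * (2 * δ) := Finset.sum_le_sum fun i _ => this i
        _ = ((m : ℝ) + 2) * (((m : ℝ) + 2) * (2 * δ)) := by
            rw [Finset.sum_const, nsmul_eq_mul, Finset.card_univ, Fintype.card_fin]; push_cast; ring
        _ = ((m : ℝ) + 2) ^ 2 * (2 * δ) := by ring
    -- the single distance is at most totalS (T ∘ x)
    have hmem01 : (1 : Fin (m + 2)) ∈ Finset.Ioi (0 : Fin (m + 2)) := by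
      rw [Finset.mem_Ioi]
      exact Fin.lt_def.mpr (by simp)
    have hsingle : dist (T (x 0)) (T (x 1)) ≤ totalS (T ∘ x) := by
      have h2 : dist ((T ∘ x) 0) ((T ∘ x) 1) ≤ ∑ j ∈ Finset.Ioi (0 : Fin (m + 2)),
          dist ((T ∘ x) 0) ((T ∘ x) j) :=
        Finset.single_le_sum (fun j _ => dist_nonneg) hmem01
      have h3 : ∑ j ∈ Finset.Ioi (0 : Fin (m + 2)), dist ((T ∘ x) 0) ((T ∘ x) j) ≤
          totalS (T ∘ x) := by
        unfold totalS
        exact Finset.single_le_sum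
          (f := fun i => ∑ j ∈ Finset.Ioi i, dist ((T ∘ x) i) ((T ∘ x) j))
          (fun i _ => Finset.sum_nonneg fun j _ => dist_nonneg) (Finset.mem_univ 0)
      exact h2.trans h3
    have hSnonneg : 0 ≤ totalS x := Finset.sum_nonneg fun i _ =>
      Finset.sum_nonneg fun j _ => dist_nonneg
    have hchain : dist (T y) (T x₀) ≤ ((m : ℝ) + 2) ^ 2 * (2 * δ) := by
      calc dist (T y) (T x₀) = dist (T (x 0)) (T (x 1)) := by rw [hx0, hx1, dist_comm]
        _ ≤ totalS (T ∘ x) := hsingle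
        _ ≤ α * totalS x := hcontr x hxinj
        _ ≤ 1 * totalS x := by nlinarith
        _ = totalS x := one_mul _
        _ ≤ ((m : ℝ) + 2) ^ 2 * (2 * δ) := hS
    have : ((m : ℝ) + 2) ^ 2 * (2 * δ) = ε / 2 := by
      rw [hδdef]; field_simp; ring
    rw [this] at hchain
    linarith
  · -- isolated point case
    have hbot : ∃ δ > (0:ℝ), (Metric.ball x₀ δ ∩ {x₀}ᶜ) = ∅ := by
      by_contra hcon
      push_neg at hcon
      apply hiso
      rw [Metric.nhdsWithin_basis_ball.neBot_iff]
      intro δ hδ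
      exact hcon δ hδ
    obtain ⟨δ, hδ, hball⟩ := hbot
    refine ⟨δ, hδ, fun y hy => ?_⟩
    have hyx : y = x₀ := by
      by_contra hne
      exact absurd hball (Set.nonempty_iff_ne_empty.mp ⟨y, Metric.mem_ball.mpr hy, hne⟩)
    simp [hyx, hε]
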